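/- There exists an absolute constant C > 0 such that the following holds. For every d ≥ 2, every M ≥ 1, every δ ∈ (0,1), and all fixed vectors Δ_1,…,Δ_M ∈ ℝ^d satisfying (1/M)·Σ_{n=1}^M ‖Δ_n‖₂² ≤ σ² and max_{1≤n≤M} ‖Δ_n‖₂ ≤ B for some σ, B ≥ 0: if v_1,…,v_M are i.i.d. normalized Rademacher vectors in ℝ^d (each v_n = u_n/√d with u_n uniform on {−1,+1}^d), then with probability at least 1 − δ/2, ‖(1/M)·Σ_{n=1}^M (d·v_n v_nᵀ − I_d)·Δ_n‖₂ ≤ C·(σ·√((d−1)·log(2d/δ)/M) + B·(d−1)·log(2d/δ)/M). -/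

import Mathlib

open Finset Real
open scoped ENNReal

noncomputable def eps (b : Bool) : ℝ := if b then 1 else -1

lemma eps_sq (b : Bool) : eps b * eps b = 1 := by cases b <;> simp [eps]

lemma eps_beq (a b : Bool) : eps (a == b) = eps a * eps b := by
  cases a <;> cases b <;> simp [eps]

lemma beq_beq (a b : Bool) : ((a == b) == b) = a := by cases a <;> cases b <;> rfl

lemma two_cosh_le (c : ℝ) : Real.exp c + Real.exp (-c) ≤ 2 * Real.exp (c ^ 2 / 2) := by
  have h := Real.cosh_le_exp_half_sq c
  rw [Real.cosh_eq] at h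
  linarith

lemma cube_mgf {ι : Type*} [Fintype ι] [DecidableEq ι] (c : ι → ℝ) :
    ∑ x : ι → Bool, Real.exp (∑ k, c k * eps (x k))
      = ∏ k, (Real.exp (c k) + Real.exp (-(c k))) := by
  have h1 : ∀ x : ι → Bool, Real.exp (∑ k, c k * eps (x k))
      = ∏ k, Real.exp (c k * eps (x k)) := fun x => Real.exp_sum _ _
  simp_rw [h1]
  rw [← Fintype.prod_sum (fun k (b : Bool) => Real.exp (c k * eps b))]
  refine Fintype.prod_congr _ _ fun k => ?_
  rw [Fintype.sum_bool]
  simp [eps]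

lemma cube_mgf2 {M d : ℕ} (c : Fin M → Fin d → ℝ) :
    ∑ ω : Fin M → Fin d → Bool, Real.exp (∑ n, ∑ j, c n j * eps (ω n j))
      ≤ (2 : ℝ) ^ (M * d) * Real.exp ((∑ n, ∑ j, c n j ^ 2) / 2) := by
  have h1 : ∀ ω : Fin M → Fin d → Bool,
      Real.exp (∑ n, ∑ j, c n j * eps (ω n j))
        = ∏ n, Real.exp (∑ j, c n j * eps (ω n j)) := fun ω => Real.exp_sum _ _
  simp_rw [h1]
  rw [← Fintype.prod_sum (fun n (z : Fin d → Bool) => Real.exp (∑ j, c n j * eps (z j)))]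
  have h2 : ∀ n, ∑ z : Fin d → Bool, Real.exp (∑ j, c n j * eps (z j))
      = ∏ j, (Real.exp (c n j) + Real.exp (-(c n j))) := fun n => cube_mgf _
  simp_rw [h2]
  calc ∏ n, ∏ j, (Real.exp (c n j) + Real.exp (-(c n j)))
      ≤ ∏ n, ∏ j, 2 * Real.exp (c n j ^ 2 / 2) := by
        refine Finset.prod_le_prod (fun n _ => Finset.prod_nonneg fun j _ => by positivity)
          (fun n _ => Finset.prod_le_prod (fun j _ => by positivity)
            (fun j _ => two_cosh_le _))
    _ = (2 : ℝ) ^ (M * d) * Real.exp ((∑ n, ∑ j, c n j ^ 2) / 2) := by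
        simp_rw [Finset.prod_mul_distrib, Finset.prod_const, ← Real.exp_sum]
        rw [Finset.card_univ, Finset.card_univ, Fintype.card_fin, Fintype.card_fin,
          ← pow_mul, mul_comm d M]
        congr 1
        simp_rw [Finset.sum_div]

lemma cube_chernoff {M d : ℕ} (c : Fin M → Fin d → ℝ) (s l : ℝ) (hl : 0 ≤ l) :
    ((univ.filter fun ω : Fin M → Fin d → Bool =>
        s ≤ ∑ n, ∑ j, c n j * eps (ω n j)).card : ℝ)
      ≤ (2 : ℝ) ^ (M * d) * Real.exp (l ^ 2 * (∑ n, ∑ j, c n j ^ 2) / 2 - l * s) := by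
  classical
  have key : ((univ.filter fun ω : Fin M → Fin d → Bool =>
      s ≤ ∑ n, ∑ j, c n j * eps (ω n j)).card : ℝ) * Real.exp (l * s)
      ≤ (2 : ℝ) ^ (M * d) * Real.exp (l ^ 2 * (∑ n, ∑ j, c n j ^ 2) / 2) := by
    calc ((univ.filter fun ω : Fin M → Fin d → Bool =>
        s ≤ ∑ n, ∑ j, c n j * eps (ω n j)).card : ℝ) * Real.exp (l * s)
        = ∑ _ω ∈ (univ.filter fun ω : Fin M → Fin d → Bool =>
            s ≤ ∑ n, ∑ j, c n j * eps (ω n j)), Real.exp (l * s) := by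
          rw [Finset.sum_const, nsmul_eq_mul]
      _ ≤ ∑ ω ∈ (univ.filter fun ω : Fin M → Fin d → Bool =>
            s ≤ ∑ n, ∑ j, c n j * eps (ω n j)),
            Real.exp (∑ n, ∑ j, (l * c n j) * eps (ω n j)) := by
          refine Finset.sum_le_sum fun ω hω => Real.exp_le_exp.2 ?_
          have hs := (Finset.mem_filter.1 hω).2
          calc l * s ≤ l * ∑ n, ∑ j, c n j * eps (ω n j) :=
                mul_le_mul_of_nonneg_left hs hl
            _ = ∑ n, ∑ j, (l * c n j) * eps (ω n j) := by
                rw [Finset.mul_sum]; exact Finset.sum_congr rfl fun n _ => by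
                  rw [Finset.mul_sum]; exact Finset.sum_congr rfl fun j _ => by ring
      _ ≤ ∑ ω : Fin M → Fin d → Bool,
            Real.exp (∑ n, ∑ j, (l * c n j) * eps (ω n j)) :=
          Finset.sum_le_sum_of_subset_of_nonneg (Finset.filter_subset _ _)
            (fun ω _ _ => (Real.exp_pos _).le)
      _ ≤ (2 : ℝ) ^ (M * d) * Real.exp ((∑ n, ∑ j, (l * c n j) ^ 2) / 2) := cube_mgf2 _
      _ = (2 : ℝ) ^ (M * d) * Real.exp (l ^ 2 * (∑ n, ∑ j, c n j ^ 2) / 2) := by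
          congr 2
          simp_rw [mul_pow, ← Finset.mul_sum]
  have h2 := mul_le_mul_of_nonneg_right key (Real.exp_pos (-(l * s))).le
  rw [mul_assoc, ← Real.exp_add, mul_assoc, ← Real.exp_add] at h2
  simpa [add_neg_cancel, sub_eq_add_neg] using h2

lemma cube_tail {M d : ℕ} (c : Fin M → Fin d → ℝ) (s V : ℝ) (hV : 0 < V)
    (hc : ∑ n, ∑ j, c n j ^ 2 ≤ V) (hs : 0 ≤ s) :
    ((univ.filter fun ω : Fin M → Fin d → Bool =>
        s ≤ ∑ n, ∑ j, c n j * eps (ω n j)).card : ℝ)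
      ≤ (2 : ℝ) ^ (M * d) * Real.exp (-(s ^ 2 / (2 * V))) := by
  classical
  have h := cube_chernoff c s (s / V) (by positivity)
  refine h.trans (mul_le_mul_of_nonneg_left (Real.exp_le_exp.2 ?_) (by positivity))
  have h1 : (s / V) ^ 2 * (∑ n, ∑ j, c n j ^ 2) / 2 ≤ (s / V) ^ 2 * V / 2 := by
    have := mul_le_mul_of_nonneg_left hc (sq_nonneg (s / V))
    linarith
  have h2 : (s / V) ^ 2 * V / 2 - s / V * s = -(s ^ 2 / (2 * V)) := by
    field_simp
    ring
  linarith

lemma reindex_card {M d : ℕ} (i : Fin d) (c : Fin M → Fin d → ℝ) (hc : ∀ n, c n i = 0)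
    (s : ℝ) :
    (univ.filter fun ω : Fin M → Fin d → Bool =>
        s ≤ ∑ n, ∑ j, c n j * (eps (ω n i) * eps (ω n j))).card
      = (univ.filter fun ω : Fin M → Fin d → Bool =>
        s ≤ ∑ n, ∑ j, c n j * eps (ω n j)).card := by
  classical
  set Φ : (Fin M → Fin d → Bool) → (Fin M → Fin d → Bool) :=
    fun ω n j => if j = i then ω n i else (ω n j == ω n i) with hΦ
  have hinv : ∀ ω, Φ (Φ ω) = ω := by
    intro ω; funext n j
    by_cases h : j = i
    · subst h; simp [hΦ]
    · simp [hΦ, h, beq_beq]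
  have hkey : ∀ ω, (∑ n, ∑ j, c n j * (eps (Φ ω n i) * eps (Φ ω n j)))
      = ∑ n, ∑ j, c n j * eps (ω n j) := by
    intro ω
    refine Finset.sum_congr rfl fun n _ => Finset.sum_congr rfl fun j _ => ?_
    by_cases h : j = i
    · subst h; rw [hc]; ring
    · simp only [hΦ, if_neg h, if_pos rfl, eps_beq]
      rw [show eps (ω n i) * (eps (ω n j) * eps (ω n i))
          = eps (ω n j) * (eps (ω n i) * eps (ω n i)) by ring, eps_sq, mul_one]
  refine Finset.card_bij' (fun ω _ => Φ ω) (fun ω _ => Φ ω) ?_ ?_ ?_ ?_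
  · intro ω hω
    rw [Finset.mem_filter] at hω ⊢
    refine ⟨Finset.mem_univ _, ?_⟩
    have h2 := hkey (Φ ω)
    rw [hinv ω] at h2
    rw [← h2]
    exact hω.2
  · intro ω hω
    rw [Finset.mem_filter] at hω ⊢
    exact ⟨Finset.mem_univ _, by rw [hkey ω]; exact hω.2⟩
  · intro ω _; exact hinv ω
  · intro ω _; exact hinv ω
set_option maxHeartbeats 1000000 in
theorem vector_bernstein_heterogeneity_part :
    ∃ C > (0 : ℝ), ∀ (d M : ℕ), 2 ≤ d → 1 ≤ M → ∀ δ : ℝ, 0 < δ → δ < 1 →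
      ∀ (Δ : Fin M → EuclideanSpace ℝ (Fin d)) (σ B : ℝ), 0 ≤ σ → 0 ≤ B →
      (M : ℝ)⁻¹ * ∑ n, ‖Δ n‖ ^ 2 ≤ σ ^ 2 →
      (∀ n, ‖Δ n‖ ≤ B) →
      ∀ v : (Fin M → Fin d → Bool) → Fin M → Fin d → ℝ,
      (∀ ω n i, v ω n i = (Real.sqrt d)⁻¹ * (if ω n i then 1 else -1)) →
      ENNReal.ofReal (1 - δ / 2) ≤
        (PMF.uniformOfFintype (Fin M → Fin d → Bool)).toMeasure
          {ω | ‖(M : ℝ)⁻¹ • ∑ n, Matrix.toEuclideanLin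
                  ((d : ℝ) • Matrix.vecMulVec (v ω n) (v ω n)
                    - (1 : Matrix (Fin d) (Fin d) ℝ)) (Δ n)‖
            ≤ C * (σ * Real.sqrt (((d : ℝ) - 1) * Real.log (2 * d / δ) / M)
                + B * (((d : ℝ) - 1) * Real.log (2 * d / δ) / M))} := by
  classical
  refine ⟨3, by norm_num, ?_⟩
  intro d M hd hM δ hδ0 hδ1 Δ σ B hσ hB hΔσ hΔB v hv
  have hd0 : (0:ℝ) < d := by
    have : (0:ℕ) < d := by omega
    exact_mod_cast this
  have hd2 : (2:ℝ) ≤ (d:ℝ) := by exact_mod_cast hd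
  have hM0 : (0:ℝ) < M := by
    have : (0:ℕ) < M := by omega
    exact_mod_cast this
  set L := Real.log (2 * d / δ) with hLdef
  have hq4 : (4:ℝ) ≤ 2 * d / δ := by
    rw [le_div_iff₀ hδ0]
    nlinarith
  have hL1 : (1:ℝ) < L := by
    have h4 : Real.log 4 ≤ L := Real.log_le_log (by norm_num) hq4
    have h5 : (1:ℝ) < Real.log 4 := by
      rw [Real.lt_log_iff_exp_lt (by norm_num)]
      calc Real.exp 1 < 2.7182818286 := Real.exp_one_lt_d9
        _ < 4 := by norm_num
    linarith
  have hL0 : (0:ℝ) < L := by linarith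
  have hdm1 : (0:ℝ) ≤ (d:ℝ) - 1 := by linarith
  have hst : (0:ℝ) ≤ ((d:ℝ) - 1) * L / M := by positivity
  have hsqnn := Real.sqrt_nonneg (((d:ℝ) - 1) * L / M)
  have hRHS0 : (0:ℝ) ≤ 3 * (σ * Real.sqrt (((d:ℝ) - 1) * L / M)
      + B * (((d:ℝ) - 1) * L / M)) := by
    nlinarith [mul_nonneg hσ hsqnn, mul_nonneg hB hst]
  rcases eq_or_lt_of_le hσ with hσ0 | hσpos
  · -- σ = 0 : all Δ n vanish and the event is everything
    have hsum0 : ∑ n, ‖Δ n‖ ^ 2 ≤ 0 := by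
      have h1 : (M:ℝ)⁻¹ * ∑ n, ‖Δ n‖ ^ 2 ≤ 0 := by rw [← hσ0] at hΔσ; simpa using hΔσ
      nlinarith [inv_pos.2 hM0, Finset.sum_nonneg (fun n (_ : n ∈ Finset.univ) =>
        sq_nonneg ‖Δ n‖)]
    have hΔ0 : ∀ n, Δ n = 0 := by
      intro n
      have h2 : ∀ m ∈ Finset.univ, (0:ℝ) ≤ ‖Δ m‖ ^ 2 := fun m _ => sq_nonneg _
      have h3 := (Finset.sum_eq_zero_iff_of_nonneg h2).1
        (le_antisymm hsum0 (Finset.sum_nonneg h2)) n (Finset.mem_univ n)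
      have h4 : ‖Δ n‖ = 0 := by nlinarith [norm_nonneg (Δ n)]
      exact norm_eq_zero.1 h4
    have hset : {ω : Fin M → Fin d → Bool |
        ‖(M : ℝ)⁻¹ • ∑ n, Matrix.toEuclideanLin
            ((d : ℝ) • Matrix.vecMulVec (v ω n) (v ω n)
              - (1 : Matrix (Fin d) (Fin d) ℝ)) (Δ n)‖
          ≤ 3 * (σ * Real.sqrt (((d : ℝ) - 1) * L / M)
              + B * (((d : ℝ) - 1) * L / M))} = Set.univ := by
      refine Set.eq_univ_of_forall fun ω => ?_
      simp only [Set.mem_setOf_eq]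
      have : ∀ n : Fin M, Matrix.toEuclideanLin
          ((d : ℝ) • Matrix.vecMulVec (v ω n) (v ω n)
            - (1 : Matrix (Fin d) (Fin d) ℝ)) (Δ n) = 0 := by
        intro n; rw [hΔ0 n, map_zero]
      simp only [this, Finset.sum_const_zero, smul_zero, norm_zero]
      exact hRHS0
    rw [hset]
    have : (PMF.uniformOfFintype (Fin M → Fin d → Bool)).toMeasure Set.univ = 1 :=
      MeasureTheory.measure_univ
    rw [this]
    exact ENNReal.ofReal_le_one.2 (by linarith)
  · -- main case : σ > 0
    set s := 2 * σ * Real.sqrt (L / M) with hsdef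
    have hs0 : (0:ℝ) ≤ s := by positivity
    set cc : Fin d → Fin M → Fin d → ℝ :=
      fun i n j => if j = i then 0 else (M:ℝ)⁻¹ * Δ n j with hccdef
    set Sc : (Fin M → Fin d → Bool) → Fin d → ℝ :=
      fun ω i => ∑ n, ∑ j, cc i n j * (eps (ω n i) * eps (ω n j)) with hScdef
    have hS : ∀ (ω : Fin M → Fin d → Bool) (i : Fin d),
        ((M : ℝ)⁻¹ • ∑ n, Matrix.toEuclideanLin
            ((d : ℝ) • Matrix.vecMulVec (v ω n) (v ω n)
              - (1 : Matrix (Fin d) (Fin d) ℝ)) (Δ n)) i = Sc ω i := by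
      intro ω i
      have hsq : ∀ a b : Bool, (d:ℝ) * ((Real.sqrt d)⁻¹ * (if a then 1 else (-1:ℝ)) *
          ((Real.sqrt d)⁻¹ * (if b then 1 else -1))) = eps a * eps b := by
        intro a b
        have h2 : (Real.sqrt d)⁻¹ * (Real.sqrt d)⁻¹ = (d:ℝ)⁻¹ := by
          rw [← mul_inv, Real.mul_self_sqrt hd0.le]
        field_simp [eps]
        cases a <;> cases b <;> simp [eps, Real.sq_sqrt hd0.le]
      rw [PiLp.smul_apply, smul_eq_mul, WithLp.ofLp_sum,
        Finset.sum_apply i Finset.univ (fun n => (Matrix.toEuclideanLin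
            ((d : ℝ) • Matrix.vecMulVec (v ω n) (v ω n)
              - (1 : Matrix (Fin d) (Fin d) ℝ)) (Δ n)).ofLp)]
      simp only [Matrix.toEuclideanLin_apply,
        WithLp.ofLp_toLp, Matrix.mulVec, dotProduct,
        Matrix.sub_apply, Matrix.smul_apply, Matrix.vecMulVec_apply, Matrix.one_apply,
        smul_eq_mul]
      rw [Finset.mul_sum]
      refine Finset.sum_congr rfl fun n _ => ?_
      rw [Finset.mul_sum]
      refine Finset.sum_congr rfl fun j _ => ?_
      rw [hv, hv, hsq]
      by_cases h : j = i
      · subst h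
        rcases Bool.dichotomy (ω n j) with hb | hb <;> simp [hb, eps, hccdef]
      · have h2 : i ≠ j := fun h' => h h'.symm
        simp [h, h2, eps, hccdef]
    have hnormsq : ∀ x : EuclideanSpace ℝ (Fin d), ‖x‖ ^ 2 = ∑ j, (x j) ^ 2 := by
      intro x
      rw [EuclideanSpace.norm_eq, Real.sq_sqrt (Finset.sum_nonneg fun j _ => by positivity)]
      exact Finset.sum_congr rfl fun j _ => by rw [Real.norm_eq_abs, sq_abs]
    have hsumΔ : ∑ n, ‖Δ n‖ ^ 2 ≤ M * σ ^ 2 := by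
      rw [inv_mul_le_iff₀ hM0] at hΔσ
      linarith
    have hcc2 : ∀ i, ∑ n, ∑ j, (cc i n j) ^ 2 ≤ σ ^ 2 / M := by
      intro i
      have h1 : ∀ n, ∑ j, (cc i n j) ^ 2 ≤ (M:ℝ)⁻¹ ^ 2 * ‖Δ n‖ ^ 2 := by
        intro n
        rw [hnormsq, Finset.mul_sum]
        refine Finset.sum_le_sum fun j _ => ?_
        by_cases h : j = i
        · simp [hccdef, h]
          positivity
        · simp only [hccdef, if_neg h]
          rw [mul_pow]
      calc ∑ n, ∑ j, (cc i n j) ^ 2 ≤ ∑ n, (M:ℝ)⁻¹ ^ 2 * ‖Δ n‖ ^ 2 :=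
            Finset.sum_le_sum fun n _ => h1 n
        _ = (M:ℝ)⁻¹ ^ 2 * ∑ n, ‖Δ n‖ ^ 2 := by rw [Finset.mul_sum]
        _ ≤ (M:ℝ)⁻¹ ^ 2 * (M * σ ^ 2) := by
            exact mul_le_mul_of_nonneg_left hsumΔ (by positivity)
        _ = σ ^ 2 / M := by field_simp
    have hexpL : Real.exp L = 2 * d / δ := Real.exp_log (by positivity)
    have hexp2L : Real.exp (-(2 * L)) = δ ^ 2 / (4 * d ^ 2) := by
      rw [Real.exp_neg, two_mul, Real.exp_add, hexpL]
      field_simp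
      ring
    have hs2V : s ^ 2 / (2 * (σ ^ 2 / M)) = 2 * L := by
      rw [hsdef, mul_pow, mul_pow, Real.sq_sqrt (by positivity : (0:ℝ) ≤ L / M)]
      field_simp
    have hbad : ∀ (i : Fin d) (τv : ℝ), τv = 1 ∨ τv = -1 →
        ((Finset.univ.filter fun ω : Fin M → Fin d → Bool =>
            s ≤ ∑ n, ∑ j, (τv * cc i n j) * (eps (ω n i) * eps (ω n j))).card : ℝ)
          ≤ 2 ^ (M * d) * (δ ^ 2 / (4 * d ^ 2)) := by
      intro i τv hτ
      have h1 : (Finset.univ.filter fun ω : Fin M → Fin d → Bool =>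
            s ≤ ∑ n, ∑ j, (τv * cc i n j) * (eps (ω n i) * eps (ω n j))).card
          = (Finset.univ.filter fun ω : Fin M → Fin d → Bool =>
            s ≤ ∑ n, ∑ j, (τv * cc i n j) * eps (ω n j)).card :=
        reindex_card i (fun n j => τv * cc i n j)
          (fun n => by simp [hccdef]) s
      have hτ2 : τv ^ 2 = 1 := by rcases hτ with h | h <;> rw [h] <;> norm_num
      have hsum2 : ∑ n, ∑ j, (τv * cc i n j) ^ 2 ≤ σ ^ 2 / M := by
        have : ∀ n j, (τv * cc i n j) ^ 2 = (cc i n j) ^ 2 := by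
          intro n j; rw [mul_pow, hτ2, one_mul]
        simp_rw [this]
        exact hcc2 i
      have h2 := cube_tail (fun n j => τv * cc i n j) s (σ ^ 2 / M)
        (by positivity) hsum2 hs0
      rw [h1]
      refine h2.trans ?_
      rw [hs2V, hexp2L]
    set P : (Fin M → Fin d → Bool) → Prop := fun ω =>
      ‖(M : ℝ)⁻¹ • ∑ n, Matrix.toEuclideanLin
          ((d : ℝ) • Matrix.vecMulVec (v ω n) (v ω n)
            - (1 : Matrix (Fin d) (Fin d) ℝ)) (Δ n)‖
        ≤ 3 * (σ * Real.sqrt (((d : ℝ) - 1) * L / M)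
            + B * (((d : ℝ) - 1) * L / M)) with hPdef
    -- if all coordinates are small, P holds
    have hgood : ∀ ω : Fin M → Fin d → Bool, (∀ i, |Sc ω i| ≤ s) → P ω := by
      intro ω hω
      rw [hPdef]
      set X : EuclideanSpace ℝ (Fin d) := (M : ℝ)⁻¹ • ∑ n, Matrix.toEuclideanLin
          ((d : ℝ) • Matrix.vecMulVec (v ω n) (v ω n)
            - (1 : Matrix (Fin d) (Fin d) ℝ)) (Δ n) with hX
      have h1 : ‖X‖ ^ 2 ≤ (d:ℝ) * s ^ 2 := by
        rw [hnormsq X]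
        calc ∑ j, (X j) ^ 2 ≤ ∑ _j : Fin d, s ^ 2 := by
              refine Finset.sum_le_sum fun j _ => ?_
              rw [hX, hS ω j]
              exact sq_le_sq' (by linarith [(abs_le.1 (hω j)).1]) (abs_le.1 (hω j)).2
          _ = (d:ℝ) * s ^ 2 := by
              rw [Finset.sum_const, Finset.card_univ, Fintype.card_fin, nsmul_eq_mul]
      have h2 : ‖X‖ ≤ Real.sqrt d * s := by
        have h3 : ‖X‖ ≤ Real.sqrt ((d:ℝ) * s ^ 2) := by
          rw [← Real.sqrt_sq (norm_nonneg X)]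
          exact Real.sqrt_le_sqrt h1
        rwa [Real.sqrt_mul hd0.le, Real.sqrt_sq hs0] at h3
      have h4 : Real.sqrt d * s = 2 * σ * Real.sqrt ((d:ℝ) * L / M) := by
        rw [hsdef, show (d:ℝ) * L / M = (d:ℝ) * (L / M) from mul_div_assoc _ _ _,
          Real.sqrt_mul hd0.le]
        ring
      have h5 : Real.sqrt ((d:ℝ) * L / M) ≤ Real.sqrt 2 * Real.sqrt (((d:ℝ)-1) * L / M) := by
        rw [← Real.sqrt_mul (by norm_num : (0:ℝ) ≤ 2)]
        apply Real.sqrt_le_sqrt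
        rw [show (2:ℝ) * (((d:ℝ)-1) * L / M) = (2 * (((d:ℝ)-1) * L)) / M by ring]
        exact (div_le_div_iff_of_pos_right hM0).2 (by nlinarith [hL0.le, hd2])
      have h6 : 2 * Real.sqrt 2 ≤ 3 := by
        nlinarith [Real.sq_sqrt (by norm_num : (0:ℝ) ≤ 2), Real.sqrt_nonneg 2]
      have h7 : ‖X‖ ≤ 3 * (σ * Real.sqrt (((d:ℝ)-1) * L / M)) := by
        calc ‖X‖ ≤ Real.sqrt d * s := h2
          _ = 2 * σ * Real.sqrt ((d:ℝ) * L / M) := h4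
          _ ≤ 2 * σ * (Real.sqrt 2 * Real.sqrt (((d:ℝ)-1) * L / M)) := by
              exact mul_le_mul_of_nonneg_left h5 (by positivity)
          _ = (2 * Real.sqrt 2) * (σ * Real.sqrt (((d:ℝ)-1) * L / M)) := by ring
          _ ≤ 3 * (σ * Real.sqrt (((d:ℝ)-1) * L / M)) := by
              exact mul_le_mul_of_nonneg_right h6 (mul_nonneg hσ hsqnn)
      have h8 : (0:ℝ) ≤ B * (((d:ℝ)-1) * L / M) := mul_nonneg hB hst
      linarith
    -- union bound over coordinates and signs
    have hsub : (Finset.univ.filter fun ω : Fin M → Fin d → Bool => ¬ P ω) ⊆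
        Finset.univ.biUnion (fun i : Fin d =>
          (Finset.univ.filter fun ω : Fin M → Fin d → Bool =>
            s ≤ ∑ n, ∑ j, ((1:ℝ) * cc i n j) * (eps (ω n i) * eps (ω n j)))
          ∪ (Finset.univ.filter fun ω : Fin M → Fin d → Bool =>
            s ≤ ∑ n, ∑ j, ((-1:ℝ) * cc i n j) * (eps (ω n i) * eps (ω n j)))) := by
      intro ω hω
      rw [Finset.mem_filter] at hω
      by_contra hno
      rw [Finset.mem_biUnion] at hno
      push_neg at hno
      refine hω.2 (hgood ω fun i => ?_)
      have h1 := hno i (Finset.mem_univ i)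
      rw [Finset.mem_union] at h1
      push_neg at h1
      obtain ⟨ha, hb⟩ := h1
      rw [Finset.mem_filter, not_and] at ha hb
      have ha2 := ha (Finset.mem_univ ω)
      have hb2 := hb (Finset.mem_univ ω)
      have hpos : ∑ n, ∑ j, ((1:ℝ) * cc i n j) * (eps (ω n i) * eps (ω n j)) = Sc ω i := by
        simp [hScdef]
      have hneg : ∑ n, ∑ j, ((-1:ℝ) * cc i n j) * (eps (ω n i) * eps (ω n j))
          = -(Sc ω i) := by
        rw [hScdef, ← Finset.sum_neg_distrib]
        refine Finset.sum_congr rfl fun n _ => ?_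
        rw [← Finset.sum_neg_distrib]
        exact Finset.sum_congr rfl fun j _ => by ring
      rw [hpos] at ha2
      rw [hneg] at hb2
      rw [not_le] at ha2 hb2
      exact (abs_le.2 ⟨by linarith, by linarith⟩)
    -- counting
    have hcardΩ : Fintype.card (Fin M → Fin d → Bool) = 2 ^ (M * d) := by
      simp [Fintype.card_fun, ← pow_mul, mul_comm d M]
    set N : ℝ := (2:ℝ) ^ (M * d) with hNdef
    have hN0 : (0:ℝ) < N := by positivity
    have hcount : ((Finset.univ.filter fun ω : Fin M → Fin d → Bool => ¬ P ω).card : ℝ)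
        ≤ N * (δ / 2) := by
      have h1 := Finset.card_le_card hsub
      have h2 := Finset.card_biUnion_le (s := (Finset.univ : Finset (Fin d)))
        (t := fun i : Fin d =>
          (Finset.univ.filter fun ω : Fin M → Fin d → Bool =>
            s ≤ ∑ n, ∑ j, ((1:ℝ) * cc i n j) * (eps (ω n i) * eps (ω n j)))
          ∪ (Finset.univ.filter fun ω : Fin M → Fin d → Bool =>
            s ≤ ∑ n, ∑ j, ((-1:ℝ) * cc i n j) * (eps (ω n i) * eps (ω n j))))
      have h3 : ((Finset.univ.filter fun ω : Fin M → Fin d → Bool => ¬ P ω).card : ℝ)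
          ≤ ∑ i : Fin d, (((Finset.univ.filter fun ω : Fin M → Fin d → Bool =>
              s ≤ ∑ n, ∑ j, ((1:ℝ) * cc i n j) * (eps (ω n i) * eps (ω n j))).card : ℝ)
            + ((Finset.univ.filter fun ω : Fin M → Fin d → Bool =>
              s ≤ ∑ n, ∑ j, ((-1:ℝ) * cc i n j) * (eps (ω n i) * eps (ω n j))).card : ℝ)) := by
        have h4 := h1.trans h2
        have h5 : ((Finset.univ.filter fun ω : Fin M → Fin d → Bool => ¬ P ω).card : ℝ)
            ≤ (∑ i : Fin d, ((Finset.univ.filter fun ω : Fin M → Fin d → Bool =>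
              s ≤ ∑ n, ∑ j, ((1:ℝ) * cc i n j) * (eps (ω n i) * eps (ω n j)))
            ∪ (Finset.univ.filter fun ω : Fin M → Fin d → Bool =>
              s ≤ ∑ n, ∑ j, ((-1:ℝ) * cc i n j) * (eps (ω n i) * eps (ω n j)))).card : ℝ) := by
          exact_mod_cast h4
        refine h5.trans ?_
        push_cast
        refine Finset.sum_le_sum fun i _ => ?_
        exact_mod_cast Finset.card_union_le _ _
      have h6 : ∑ i : Fin d, (((Finset.univ.filter fun ω : Fin M → Fin d → Bool =>
              s ≤ ∑ n, ∑ j, ((1:ℝ) * cc i n j) * (eps (ω n i) * eps (ω n j))).card : ℝ)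
            + ((Finset.univ.filter fun ω : Fin M → Fin d → Bool =>
              s ≤ ∑ n, ∑ j, ((-1:ℝ) * cc i n j) * (eps (ω n i) * eps (ω n j))).card : ℝ))
          ≤ ∑ _i : Fin d, (N * (δ ^ 2 / (4 * d ^ 2)) + N * (δ ^ 2 / (4 * d ^ 2))) := by
        refine Finset.sum_le_sum fun i _ => ?_
        exact add_le_add (hbad i 1 (Or.inl rfl)) (hbad i (-1) (Or.inr rfl))
      have h7 : ∑ _i : Fin d, (N * (δ ^ 2 / (4 * d ^ 2)) + N * (δ ^ 2 / (4 * d ^ 2)))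
          = N * (δ ^ 2 / (2 * d)) := by
        rw [Finset.sum_const, Finset.card_univ, Fintype.card_fin, nsmul_eq_mul]
        field_simp
        ring
      have h8 : N * (δ ^ 2 / (2 * d)) ≤ N * (δ / 2) := by
        refine mul_le_mul_of_nonneg_left ?_ hN0.le
        rw [div_le_div_iff₀ (by positivity) (by norm_num)]
        nlinarith
      linarith
    have hsplitN : ((Finset.univ.filter P).card : ℝ)
        + ((Finset.univ.filter fun ω : Fin M → Fin d → Bool => ¬ P ω).card : ℝ) = N := by
      have := Finset.card_filter_add_card_filter_not (s := Finset.univ) (p := P)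
      rw [Finset.card_univ, hcardΩ] at this
      rw [hNdef]
      exact_mod_cast this
    have hgoodcard : (1 - δ / 2) * N ≤ ((Finset.univ.filter P).card : ℝ) := by nlinarith
    -- measure endgame
    rw [PMF.toMeasure_uniformOfFintype_apply _ ((Set.to_countable _).measurableSet)]
    have hGcard : (Fintype.card {ω : Fin M → Fin d → Bool | P ω} : ℝ≥0∞)
        = (((Finset.univ.filter P).card : ℕ) : ℝ≥0∞) := by
      norm_cast
      simp [Fintype.card_subtype]
    have hne0 : ((Fintype.card (Fin M → Fin d → Bool) : ℝ≥0∞)) ≠ 0 := by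
      simp [hcardΩ]
    have hnetop : ((Fintype.card (Fin M → Fin d → Bool) : ℝ≥0∞)) ≠ ⊤ :=
      ENNReal.natCast_ne_top _
    rw [ENNReal.le_div_iff_mul_le (Or.inl hne0) (Or.inl hnetop), hGcard]
    calc ENNReal.ofReal (1 - δ / 2) * (Fintype.card (Fin M → Fin d → Bool) : ℝ≥0∞)
        = ENNReal.ofReal ((1 - δ / 2) * N) := by
          rw [hcardΩ, ← ENNReal.ofReal_natCast (2 ^ (M * d)),
            ← ENNReal.ofReal_mul (by linarith)]
          congr 1
          rw [hNdef]
          push_cast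
          ring
      _ ≤ ENNReal.ofReal (((Finset.univ.filter P).card : ℕ) : ℝ) :=
          ENNReal.ofReal_le_ofReal hgoodcard
      _ = (((Finset.univ.filter P).card : ℕ) : ℝ≥0∞) := ENNReal.ofReal_natCast _
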